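/- Every T-codeword x with x_n = 1 covers at least one minimal deviation; that is, there exists a minimal deviation y of T such that x covers y. -/
import Mathlib


open SimpleGraph Finset

/-- In the tree `T` rooted at `n`, `v` is a child of `u`. -/
def IsChild {V : Type} (T : SimpleGraph V) (n u v : V) : Prop :=
  T.Adj u v ∧ T.dist v n = T.dist u n + 1

/-- A `T`-codeword: a map on the variable nodes `P` (encoded as a map on all vertices
vanishing off `P`) such that, at every check node, the sum of the values of its
variable neighbors is `0` in `ZMod 2`. -/
def IsCodeword {V : Type} (T : SimpleGraph V) [Fintype V] [DecidableRel T.Adj]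
    (P : Set V) (x : V → ZMod 2) : Prop :=
  (∀ v, v ∉ P → x v = 0) ∧
  ∀ q, q ∉ P → ∑ p ∈ T.neighborFinset q, x p = 0

/-- `x` covers `y` : every variable node where `y` is `1` also has `x` equal to `1`. -/
def Covers {V : Type} (P : Set V) (x y : V → ZMod 2) : Prop :=
  ∀ p ∈ P, y p = 1 → x p = 1

/-- A minimal deviation: a `T`-codeword `x` with `x n = 1` such that the only nonzero
`T`-codeword covered by `x` is `x` itself. -/
def IsMinimalDeviation {V : Type} (T : SimpleGraph V) [Fintype V] [DecidableRel T.Adj]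
    (P : Set V) (n : V) (x : V → ZMod 2) : Prop :=
  IsCodeword T P x ∧ x n = 1 ∧
  ∀ y, IsCodeword T P y → Covers P x y → y ≠ 0 → y = x

/-- every `T`-codeword `x` with `x n = 1` covers at least one minimal
deviation of `T`. -/
theorem codeword_covers_minimal_deviation {V : Type} [Fintype V]
    (T : SimpleGraph V) [DecidableRel T.Adj] (hT : T.IsTree)
    (P : Set V) (hbip : ∀ u v, T.Adj u v → (u ∈ P ↔ v ∉ P))
    (n : V) (hn : n ∈ P)
    (x : V → ZMod 2) (hx : IsCodeword T P x) (hxn : x n = 1) :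
    ∃ y, IsMinimalDeviation T P n y ∧ Covers P x y := by
  classical
  have two : ∀ a : ZMod 2, a ≠ 0 → a = 1 := by decide
  set C : (V → ZMod 2) → Prop :=
    fun y => IsCodeword T P y ∧ Covers P x y ∧ y n = 1 with hCdef
  have hCx : C x := ⟨hx, fun p _ h => h, hxn⟩
  set sz : (V → ZMod 2) → ℕ :=
    fun y => (Finset.univ.filter (fun v => y v ≠ 0)).card with hszdef
  have hex : ∃ k, ∃ y, C y ∧ sz y = k := ⟨sz x, x, hCx, rfl⟩
  obtain ⟨y, hCy, hky⟩ := Nat.find_spec hex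
  have hmin : ∀ z, C z → sz y ≤ sz z := by
    intro z hz
    rw [hky]
    exact Nat.find_le ⟨z, hz, rfl⟩
  obtain ⟨hyc, hyx, hyn⟩ := hCy
  refine ⟨y, ⟨hyc, hyn, ?_⟩, hyx⟩
  intro z hzc hzy hz0
  by_contra hne
  -- the support of `z` is contained in that of `y`
  have hsub : ∀ v, z v ≠ 0 → y v ≠ 0 := by
    intro v hv
    by_cases hvP : v ∈ P
    · have := hzy v hvP (two _ hv); simp [this]
    · exact absurd (hzc.1 v hvP) hv
  by_cases hzn : z n = 1
  · -- `z` itself is a strictly smaller candidate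
    have hCz : C z := ⟨hzc, fun p hp h => hyx p hp (hzy p hp h), hzn⟩
    obtain ⟨v, hv⟩ : ∃ v, z v ≠ y v := by
      by_contra h; push_neg at h; exact hne (funext h)
    have hzv : z v = 0 := by
      by_contra hzv
      have h1 := two _ hzv
      by_cases hvP : v ∈ P
      · exact hv (h1.trans (hzy v hvP h1).symm)
      · exact hzv (hzc.1 v hvP)
    have hyv : y v ≠ 0 := fun h => hv (by rw [hzv, h])
    have hlt : sz z < sz y := by
      apply Finset.card_lt_card
      constructor
      · intro u hu
        simp only [Finset.mem_filter, Finset.mem_univ, true_and] at *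
        exact hsub u hu
      · intro h
        have := h (by simp only [Finset.mem_filter, Finset.mem_univ, true_and]; exact hyv)
        simp only [Finset.mem_filter, Finset.mem_univ, true_and] at this
        exact this hzv
    exact absurd (hmin z hCz) (by omega)
  · -- here `z n = 0`; consider `w = y + z`, a strictly smaller candidate
    have hzn0 : z n = 0 := by
      rcases (show ∀ a : ZMod 2, a = 0 ∨ a = 1 from by decide) (z n) with h | h
      · exact h
      · exact absurd h hzn
    set w : V → ZMod 2 := fun v => y v + z v with hw
    have hwc : IsCodeword T P w := by
      constructor
      · intro v hv; simp [hw, hyc.1 v hv, hzc.1 v hv]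
      · intro q hq
        simp only [hw]
        rw [Finset.sum_add_distrib, hyc.2 q hq, hzc.2 q hq, add_zero]
    have hwsub : ∀ v, w v ≠ 0 → y v ≠ 0 := by
      intro v hv h0
      have hzv : z v = 0 := by
        by_contra hz; exact (hsub v hz) h0
      exact hv (by simp [hw, h0, hzv])
    have hCw : C w := by
      refine ⟨hwc, ?_, ?_⟩
      · intro p hp h
        exact hyx p hp (two _ (hwsub p (by rw [h]; exact one_ne_zero)))
      · simp [hw, hyn, hzn0]
    obtain ⟨v, hv⟩ : ∃ v, z v ≠ 0 := by
      by_contra h; push_neg at h; exact hz0 (funext h)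
    have hyv : y v ≠ 0 := hsub v hv
    have hwv : w v = 0 := by
      have h1 := two _ hv
      have h2 := two _ hyv
      simp only [hw, h1, h2]; decide
    have hlt : sz w < sz y := by
      apply Finset.card_lt_card
      constructor
      · intro u hu
        simp only [Finset.mem_filter, Finset.mem_univ, true_and] at *
        exact hwsub u hu
      · intro h
        have := h (by simp only [Finset.mem_filter, Finset.mem_univ, true_and]; exact hyv)
        simp only [Finset.mem_filter, Finset.mem_univ, true_and] at this
        exact this hwv
    exact absurd (hmin w hCw) (by omega)
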